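/- Let t ∈ (0,2π) with t ≠ π. There exists a constant c > 0, depending only on t, such that for all integers k and n with n ≠ k: |(2πk+t)² − (2πn+t)²| ≥ c · (1 + ||k| − |n||) · (1 + |k| + |n|). -/
import Mathlib


/-- For `t ∈ (0,2π)`, `t ≠ π`, there is `c > 0` such that for all integers `k ≠ n`,
`|(2πk+t)² − (2πn+t)²| ≥ c (1 + ||k|−|n||)(1 + |k| + |n|)`. -/
theorem eigenvalue_separation (t : ℝ) (ht : t ∈ Set.Ioo 0 (2 * Real.pi)) (htpi : t ≠ Real.pi) :
    ∃ c : ℝ, 0 < c ∧ ∀ k n : ℤ, n ≠ k →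
      c * ((1 + |(|k| : ℝ) - (|n| : ℝ)|) * (1 + (|k| : ℝ) + (|n| : ℝ)))
        ≤ |(2 * Real.pi * (k : ℝ) + t) ^ 2 - (2 * Real.pi * (n : ℝ) + t) ^ 2| := by
  obtain ⟨ht0, ht2⟩ := ht
  have hπ : (0:ℝ) < Real.pi := Real.pi_pos
  set δ : ℝ := min t (min (2 * Real.pi - t) |t - Real.pi|) with hδdef
  have hδt : δ ≤ t := min_le_left _ _
  have hδ2 : δ ≤ 2 * Real.pi - t := le_trans (min_le_right _ _) (min_le_left _ _)
  have hδp : δ ≤ |t - Real.pi| := le_trans (min_le_right _ _) (min_le_right _ _)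
  have hδpos : 0 < δ :=
    lt_min ht0 (lt_min (by linarith) (abs_pos.mpr (sub_ne_zero.mpr htpi)))
  have hδπ : δ < Real.pi := by
    have : |t - Real.pi| < Real.pi := by
      rw [abs_lt]; constructor <;> linarith
    linarith
  -- Lemma A: |π m + t| ≥ δ for all integers m
  have hA : ∀ m : ℤ, δ ≤ |Real.pi * (m:ℝ) + t| := by
    intro m
    rcases lt_trichotomy m (-1) with h | h | h
    · rcases eq_or_lt_of_le (show m ≤ -2 by omega) with h2 | h2
      · have e : Real.pi * (m:ℝ) + t = -(2 * Real.pi - t) := by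
          rw [h2]; push_cast; ring
        rw [e, abs_neg, abs_of_pos (by linarith)]; exact hδ2
      · have hm : (m:ℝ) ≤ -3 := by exact_mod_cast (show m ≤ -3 by omega)
        have h1 : Real.pi * (m:ℝ) ≤ Real.pi * (-3) :=
          mul_le_mul_of_nonneg_left hm hπ.le
        refine le_abs.mpr (Or.inr ?_)
        linarith
    · have e : Real.pi * (m:ℝ) + t = t - Real.pi := by
        rw [h]; push_cast; ring
      rw [e]; exact hδp
    · rcases eq_or_lt_of_le (show 0 ≤ m by omega) with h2 | h2
      · have e : Real.pi * (m:ℝ) + t = t := by rw [← h2]; push_cast; ring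
        rw [e, abs_of_pos ht0]; exact hδt
      · have hm : (1:ℝ) ≤ (m:ℝ) := by exact_mod_cast (show (1:ℤ) ≤ m by omega)
        have h1 : Real.pi * 1 ≤ Real.pi * (m:ℝ) :=
          mul_le_mul_of_nonneg_left hm hπ.le
        refine le_abs.mpr (Or.inl ?_)
        linarith
  -- Lemma B: |π m + t| ≥ π |m| − 2π
  have hB : ∀ m : ℤ, Real.pi * ((|m| : ℤ) : ℝ) - 2 * Real.pi ≤ |Real.pi * (m:ℝ) + t| := by
    intro m
    have h1 : |Real.pi * (m:ℝ)| ≤ |Real.pi * (m:ℝ) + t| + |t| := by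
      calc |Real.pi * (m:ℝ)| = |(Real.pi * (m:ℝ) + t) + (-t)| := by ring_nf
        _ ≤ |Real.pi * (m:ℝ) + t| + |(-t)| := abs_add_le _ _
        _ = |Real.pi * (m:ℝ) + t| + |t| := by rw [abs_neg]
    have h2 : |Real.pi * (m:ℝ)| = Real.pi * ((|m| : ℤ) : ℝ) := by
      rw [abs_mul, abs_of_pos hπ, Int.cast_abs]
    have h3 : |t| = t := abs_of_pos ht0
    linarith
  -- Lemma C: |π m + t| ≥ (δ/4)(1 + |m|)
  have hC : ∀ m : ℤ, δ / 4 * (1 + ((|m| : ℤ) : ℝ)) ≤ |Real.pi * (m:ℝ) + t| := by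
    intro m
    rcases le_or_gt (|m|) 3 with h | h
    · have hc : ((|m| : ℤ) : ℝ) ≤ 3 := by exact_mod_cast h
      have hc0 : (0:ℝ) ≤ ((|m| : ℤ) : ℝ) := by exact_mod_cast abs_nonneg m
      have := hA m
      nlinarith
    · have hc : (4:ℝ) ≤ ((|m| : ℤ) : ℝ) := by exact_mod_cast (show (4:ℤ) ≤ |m| by omega)
      have := hB m
      nlinarith
  refine ⟨Real.pi * δ / 2, by positivity, ?_⟩
  intro k n hnk
  have hfac : (2 * Real.pi * (k:ℝ) + t) ^ 2 - (2 * Real.pi * (n:ℝ) + t) ^ 2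
      = (2 * Real.pi * (((k - n : ℤ)):ℝ)) * (2 * (Real.pi * (((k + n : ℤ)):ℝ) + t)) := by
    push_cast; ring
  have e1 : |2 * Real.pi * (((k - n : ℤ)):ℝ)| = 2 * Real.pi * ((|k - n| : ℤ) : ℝ) := by
    rw [abs_mul, abs_of_pos (by linarith : (0:ℝ) < 2 * Real.pi), Int.cast_abs]
  have e2 : |2 * (Real.pi * (((k + n : ℤ)):ℝ) + t)| = 2 * |Real.pi * (((k + n : ℤ)):ℝ) + t| := by
    rw [abs_mul, abs_two]
  rw [hfac, abs_mul, e1, e2]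
  -- integer inequality
  have h1 : (1 : ℤ) ≤ |k - n| := by simp only [Int.abs_eq_natAbs]; omega
  have hint : ((1 + |(|k| - |n|)|) * (1 + |k| + |n|) : ℤ) ≤ 2 * |k - n| * (1 + |k + n|) := by
    rcases le_total (|k - n|) (|k + n|) with h | h
    · have ea : |(|k| - |n|)| = |k - n| := by simp only [Int.abs_eq_natAbs] at *; omega
      have eb : |k| + |n| = |k + n| := by simp only [Int.abs_eq_natAbs] at *; omega
      have hb0 : (0:ℤ) ≤ |k + n| := abs_nonneg _
      rw [ea]
      nlinarith
    · have ea : |(|k| - |n|)| = |k + n| := by simp only [Int.abs_eq_natAbs] at *; omega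
      have eb : |k| + |n| = |k - n| := by simp only [Int.abs_eq_natAbs] at *; omega
      have hb0 : (0:ℤ) ≤ |k + n| := abs_nonneg _
      rw [ea]
      nlinarith
  have hR : (1 + |(|k| : ℝ) - (|n| : ℝ)|) * (1 + (|k| : ℝ) + (|n| : ℝ))
      ≤ 2 * ((|k - n| : ℤ) : ℝ) * (1 + ((|k + n| : ℤ) : ℝ)) := by
    exact_mod_cast hint
  have hA1 : (1:ℝ) ≤ ((|k - n| : ℤ) : ℝ) := by exact_mod_cast h1
  have hYA : δ / 4 * (1 + ((|k + n| : ℤ) : ℝ)) ≤ |Real.pi * (((k + n : ℤ)):ℝ) + t| := hC (k + n)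
  have hB0 : (0:ℝ) ≤ ((|k + n| : ℤ) : ℝ) := by exact_mod_cast abs_nonneg (k + n)
  set A : ℝ := ((|k - n| : ℤ) : ℝ)
  set B : ℝ := ((|k + n| : ℤ) : ℝ)
  set Y : ℝ := |Real.pi * (((k + n : ℤ)):ℝ) + t|
  calc Real.pi * δ / 2 * ((1 + |(|k| : ℝ) - (|n| : ℝ)|) * (1 + (|k| : ℝ) + (|n| : ℝ)))
      ≤ Real.pi * δ / 2 * (2 * A * (1 + B)) :=
        mul_le_mul_of_nonneg_left hR (by positivity)
    _ = 4 * Real.pi * A * (δ / 4 * (1 + B)) := by ring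
    _ ≤ 4 * Real.pi * A * Y :=
        mul_le_mul_of_nonneg_left hYA (by positivity)
    _ = 2 * Real.pi * A * (2 * Y) := by ring
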